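/- Let a, u₂ ∈ ℝ and u₁ ∈ ℝ with u₁ + u₂ > a, and set l = arccos(1 − 2·exp(a − u₁ − u₂)) ∈ (0, π). Then: (i) the function u ↦ √(exp(u₂ − u − a) − exp(−2u)) is differentiable at u₁ with derivative −cos(l)/(sin(l)·exp(u₁)) = −cot(l)/exp(u₁); and (ii) the function u ↦ √(exp(u − u₁ − a) − exp(−2u₁)) is differentiable at u₂ with derivative 1/(exp(u₁)·sin(l)). -/

import Mathlib

open Real

/-- Derivatives of the horocyclic arc length `ρ₁₂` of a decorated semi-ideal hyperbolic
triangle with respect to the distances `u₁`, `u₂` from the non-ideal vertex to the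
horocycles, the decorated side length `a` being fixed. -/
theorem horocyclic_arc_derivatives (a u₁ u₂ : ℝ) (h : a < u₁ + u₂) (l : ℝ)
    (hl : l = Real.arccos (1 - 2 * Real.exp (a - u₁ - u₂))) :
    HasDerivAt (fun u => Real.sqrt (Real.exp (u₂ - u - a) - Real.exp (-2 * u)))
      (-(Real.cos l / (Real.sin l * Real.exp u₁))) u₁ ∧
    HasDerivAt (fun u => Real.sqrt (Real.exp (u - u₁ - a) - Real.exp (-2 * u₁)))
      (1 / (Real.exp u₁ * Real.sin l)) u₂ := by
  set t := Real.exp (a - u₁ - u₂) with ht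
  have ht0 : 0 < t := Real.exp_pos _
  have ht1 : t < 1 := by
    rw [ht, Real.exp_lt_one_iff]; linarith
  have hE : Real.exp (-2 * u₁) < Real.exp (u₂ - u₁ - a) :=
    Real.exp_lt_exp.mpr (by linarith)
  set E := Real.exp (u₂ - u₁ - a) - Real.exp (-2 * u₁) with hEdef
  have hEpos : 0 < E := sub_pos.mpr hE
  have hcos : Real.cos l = 1 - 2 * t := by
    rw [hl]; exact Real.cos_arccos (by linarith) (by linarith)
  have hsin : Real.sin l = Real.sqrt (1 - (1 - 2 * t) ^ 2) := by
    rw [hl, Real.sin_arccos]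
  have hsinpos : 0 < Real.sin l := by
    rw [hsin]; apply Real.sqrt_pos.mpr; nlinarith
  have hprod : Real.exp (u₂ - u₁ - a) * t = Real.exp (-2 * u₁) := by
    rw [ht, ← Real.exp_add]
    congr 1; ring
  have hexp2 : Real.exp (-2 * u₁) = Real.exp (-u₁) ^ 2 := by
    rw [sq, ← Real.exp_add]
    congr 1; ring
  have hPexp : Real.exp u₁ * Real.exp (-u₁) = 1 := by
    rw [← Real.exp_add]; simp
  have key : Real.sin l * Real.exp u₁ * Real.sqrt E = 2 * (1 - t) := by
    rw [hsin]
    have h1 : Real.sqrt (1 - (1 - 2 * t) ^ 2) * Real.sqrt E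
        = Real.sqrt ((1 - (1 - 2 * t) ^ 2) * E) :=
      (Real.sqrt_mul (by nlinarith) E).symm
    have hEt : E * t = Real.exp (-2 * u₁) * (1 - t) := by
      rw [hEdef]; linear_combination hprod
    have h2 : (1 - (1 - 2 * t) ^ 2) * E = (2 * Real.exp (-u₁) * (1 - t)) ^ 2 := by
      linear_combination (4 - 4 * t) * hEt + 4 * (1 - t) ^ 2 * hexp2
    calc Real.sqrt (1 - (1 - 2 * t) ^ 2) * Real.exp u₁ * Real.sqrt E
        = Real.exp u₁ * (Real.sqrt (1 - (1 - 2 * t) ^ 2) * Real.sqrt E) := by ring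
      _ = Real.exp u₁ * (2 * Real.exp (-u₁) * (1 - t)) := by
          rw [h1, h2, Real.sqrt_sq (by nlinarith [Real.exp_pos (-u₁)])]
      _ = 2 * (1 - t) := by linear_combination (2 * (1 - t)) * hPexp
  have hs : 0 < Real.sqrt E := Real.sqrt_pos.mpr hEpos
  have hsq : Real.sqrt E ^ 2 = E := Real.sq_sqrt hEpos.le
  have d1 : HasDerivAt (fun u => Real.exp (u₂ - u - a) - Real.exp (-2 * u))
      (Real.exp (u₂ - u₁ - a) * (-1) - Real.exp (-2 * u₁) * (-2)) u₁ := by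
    have ha : HasDerivAt (fun u : ℝ => u₂ - u - a) (-1) u₁ := by
      simpa using (((hasDerivAt_id u₁).const_sub u₂).sub_const a)
    have hb : HasDerivAt (fun u : ℝ => -2 * u) (-2) u₁ := by
      simpa using (hasDerivAt_id u₁).const_mul (-2 : ℝ)
    simpa using (ha.exp).fun_sub (hb.exp)
  have d2 : HasDerivAt (fun u => Real.exp (u - u₁ - a) - Real.exp (-2 * u₁))
      (Real.exp (u₂ - u₁ - a)) u₂ := by
    have ha : HasDerivAt (fun u : ℝ => u - u₁ - a) 1 u₂ := by
      simpa using (((hasDerivAt_id u₂).sub_const u₁).sub_const a)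
    simpa using (ha.exp).sub_const (Real.exp (-2 * u₁))
  constructor
  · have hd := d1.sqrt (show Real.exp (u₂ - u₁ - a) - Real.exp (-2 * u₁) ≠ 0 from hEpos.ne')
    convert hd using 1
    rw [hcos]
    have goal1 : (Real.exp (u₂ - u₁ - a) * (-1) - Real.exp (-2 * u₁) * (-2)) *
        (Real.sin l * Real.exp u₁) = -(1 - 2 * t) * (2 * Real.sqrt E) := by
      apply mul_right_cancel₀ hs.ne'
      linear_combination (-(Real.exp (u₂ - u₁ - a)) + 2 * Real.exp (-2 * u₁)) * key +
        2 * (1 - 2 * t) * hsq - 2 * hprod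
    rw [show Real.exp (u₂ - u₁ - a) - Real.exp (-2 * u₁) = E from rfl, ← neg_div,
      div_eq_div_iff (by positivity) (by positivity)]
    linear_combination -goal1
  · have hd := d2.sqrt (show Real.exp (u₂ - u₁ - a) - Real.exp (-2 * u₁) ≠ 0 from hEpos.ne')
    convert hd using 1
    have goal2 : Real.exp (u₂ - u₁ - a) * (Real.exp u₁ * Real.sin l) = 2 * Real.sqrt E := by
      apply mul_right_cancel₀ hs.ne'
      linear_combination Real.exp (u₂ - u₁ - a) * key - 2 * hsq - 2 * hprod
    rw [show Real.exp (u₂ - u₁ - a) - Real.exp (-2 * u₁) = E from rfl,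
      div_eq_div_iff (by positivity) (by positivity)]
    linear_combination -goal2
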